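/- arXiv:1111.5302 — 2 statements merged into one kernel-verified Lean document; each statement's English description precedes it below -/
import Mathlib

section
/- Let V = {0, π/2}^N minus the two constant vectors, and let P : ℝ^N → ℝ^N denote the orthogonal projection onto the hyperplane {x ∈ ℝ^N : Σ_{i=1}^N x_i = 0}. Then the convex hull of the finite set { f(θ) : θ ∈ V } equals the image under P of the cube [−N/2, N/2]^N. (This polytope is, up to scaling, the Voronoi cell of the root lattice A_{N−1}.) -/
open Real Finset

/-- The Kuramoto interaction vector field `f_i(θ) = Σ_j sin (θ_j - θ_i)`. -/
noncomputable def kuraF (N : ℕ) (θ : Fin N → ℝ) : Fin N → ℝ :=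
  fun i => ∑ j, Real.sin (θ j - θ i)

/-- The vertex set `V`: the non-constant vertices of the cube `{0, π/2}^N`. -/
def vertexSet (N : ℕ) : Set (Fin N → ℝ) :=
  {θ | (∀ i, θ i = 0 ∨ θ i = Real.pi / 2) ∧ (∃ i, θ i = 0) ∧ ∃ j, θ j = Real.pi / 2}

/-- Orthogonal projection of `ℝ^N` onto the hyperplane `{x | Σ_i x_i = 0}`. -/
noncomputable def meanZeroProj (N : ℕ) (x : Fin N → ℝ) : Fin N → ℝ :=
  fun i => x i - (∑ j, x j) / N

lemma card_lt (N i : ℕ) (hi : i ≤ N) :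
    (univ.filter fun m : Fin N => (m:ℕ) < i).card = i := by
  rw [← Finset.card_range i]
  apply Finset.card_bij (fun (m : Fin N) _ => (m : ℕ))
  · intro a ha; simp at ha ⊢; exact ha
  · intro a _ b _ h; exact Fin.val_injective h
  · intro n hn
    simp at hn
    exact ⟨⟨n, lt_of_lt_of_le hn hi⟩, by simp [hn], rfl⟩

lemma card_perm_lt (N : ℕ) (σ : Equiv.Perm (Fin N)) (i : ℕ) (hi : i ≤ N) :
    (univ.filter fun k : Fin N => ((σ⁻¹ k : Fin N) : ℕ) < i).card = i := by
  have : (univ.filter fun k : Fin N => ((σ⁻¹ k : Fin N) : ℕ) < i).card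
      = (univ.filter fun m : Fin N => (m:ℕ) < i).card := by
    apply Finset.card_bij (fun (k : Fin N) _ => σ⁻¹ k)
    · intro a ha; simp at ha ⊢; exact ha
    · intro a _ b _ h; exact (σ⁻¹).injective h
    · intro m hm; simp at hm; exact ⟨σ m, by simp [hm], by simp⟩
  rw [this, card_lt N i hi]

lemma kura_ind (N : ℕ) (P : Fin N → Prop) [DecidablePred P] :
    kuraF N (fun k => if P k then Real.pi/2 else 0)
    = fun k => if P k then ((univ.filter P).card : ℝ) - N else (univ.filter P).card := by
  have hle : (univ.filter P).card ≤ N := by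
    simpa using Finset.card_filter_le univ P
  funext k
  have hsplit : kuraF N (fun k => if P k then Real.pi/2 else 0) k
      = ∑ j, (if P j then Real.sin (Real.pi/2 - (if P k then Real.pi/2 else 0))
              else Real.sin (0 - (if P k then Real.pi/2 else 0))) := by
    unfold kuraF
    refine Finset.sum_congr rfl fun j _ => ?_
    by_cases h : P j <;> simp [h]
  rw [hsplit, Finset.sum_ite, Finset.sum_const, Finset.sum_const,
    nsmul_eq_mul, nsmul_eq_mul]
  have hcard : (univ.filter fun a => ¬ P a).card = N - (univ.filter P).card := by
    have := Finset.card_filter_add_card_filter_not (s := (univ : Finset (Fin N))) P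
    simp at this
    omega
  rw [hcard]
  by_cases h : P k
  · simp [h, Real.sin_pi_div_two]
    push_cast [Nat.cast_sub hle]
    ring
  · simp [h, Real.sin_pi_div_two]

lemma tele (G : ℕ → ℝ) (m N : ℕ) (hm : m < N) :
    ∑ i ∈ Ico (m+1) N, (G i - G (i-1)) = G (N-1) - G m := by
  rw [Finset.sum_Ico_eq_sum_range]
  have h1 : N - (m+1) = N-1-m := by omega
  rw [h1]
  have h2 : ∀ k, G (m+1+k) - G (m+1+k-1) = G (m+(k+1)) - G (m+k) := by
    intro k; congr 2 <;> omega
  rw [Finset.sum_congr rfl (fun k _ => h2 k)]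
  rw [Finset.sum_range_sub (fun k => G (m+k)) (N-1-m)]
  congr 2
  omega

lemma S3 (G : ℕ → ℝ) (N : ℕ) (hN : 1 ≤ N) (h0 : ∑ i ∈ range N, G i = 0) :
    ∑ i ∈ Ico 1 N, (G i - G (i-1)) * i = N * G (N-1) := by
  have key : ∀ i ∈ Ico 1 N, (G i - G (i-1)) * i
      = ((fun (j:ℕ) => (j:ℝ) * G j) i - (fun (j:ℕ) => (j:ℝ) * G j) (i-1)) - G (i-1) := by
    intro i hi
    simp only [Finset.mem_Ico] at hi
    have : ((i-1:ℕ):ℝ) = (i:ℝ) - 1 := by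
      have := hi.1; push_cast [Nat.cast_sub this]; ring
    simp only []
    rw [this]; ring
  rw [Finset.sum_congr rfl key, Finset.sum_sub_distrib]
  have t1 : ∑ i ∈ Ico 1 N, ((fun (j:ℕ) => (j:ℝ) * G j) i - (fun (j:ℕ) => (j:ℝ) * G j) (i-1))
      = ((N-1:ℕ):ℝ) * G (N-1) - 0 * G 0 := by
    have := tele (fun (j:ℕ) => (j:ℝ) * G j) 0 N hN
    simpa using this
  have t2 : ∑ i ∈ Ico 1 N, G (i-1) = ∑ i ∈ range (N-1), G i := by
    rw [Finset.sum_Ico_eq_sum_range]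
    apply Finset.sum_congr (by congr 1) (fun k _ => by congr 1; omega)
  have t3 : ∑ i ∈ range (N-1), G i = - G (N-1) := by
    have : N = (N-1) + 1 := by omega
    rw [this, Finset.sum_range_succ] at h0
    linarith
  rw [t1, t2, t3]
  have : ((N-1:ℕ):ℝ) = (N:ℝ) - 1 := by push_cast [Nat.cast_sub hN]; ring
  rw [this]; ring

lemma card_perm_ge (N : ℕ) (σ : Equiv.Perm (Fin N)) (i : ℕ) (hi : i ≤ N) :
    (univ.filter fun k : Fin N => i ≤ ((σ⁻¹ k : Fin N) : ℕ)).card = N - i := by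
  have h1 : (univ.filter fun k : Fin N => i ≤ ((σ⁻¹ k : Fin N) : ℕ))
      = univ.filter fun k : Fin N => ¬ (((σ⁻¹ k : Fin N) : ℕ) < i) := by
    apply Finset.filter_congr; intro k _; simp [not_lt]
  have h2 := Finset.card_filter_add_card_filter_not
    (s := (univ : Finset (Fin N))) (fun k : Fin N => ((σ⁻¹ k : Fin N) : ℕ) < i)
  rw [card_perm_lt N σ i hi] at h2
  simp only [Finset.card_univ, Fintype.card_fin] at h2
  rw [h1]
  omega

lemma mem_hull (N : ℕ) (hN : 2 ≤ N) (y : Fin N → ℝ)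
    (hsum : ∑ k, y k = 0) (hdiff : ∀ a b, y a - y b ≤ N) :
    y ∈ convexHull ℝ (kuraF N '' vertexSet N) := by
  classical
  have hNpos : 0 < N := by omega
  have hNR : (0:ℝ) < N := by exact_mod_cast hNpos
  set σ := Tuple.sort y with hσ
  set G : ℕ → ℝ := fun m => if h : m < N then y (σ ⟨m, h⟩) else 0 with hG
  have hGval : ∀ (m : ℕ) (h : m < N), G m = y (σ ⟨m, h⟩) := by
    intro m h; simp [hG, h]
  have hmono : ∀ a b : ℕ, a ≤ b → b < N → G a ≤ G b := by
    intro a b hab hb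
    have ha : a < N := lt_of_le_of_lt hab hb
    rw [hGval a ha, hGval b hb]
    exact Tuple.monotone_sort y (show (⟨a,ha⟩ : Fin N) ≤ ⟨b,hb⟩ from hab)
  have hG0 : ∑ i ∈ range N, G i = 0 := by
    rw [← Fin.sum_univ_eq_sum_range]
    have h1 : ∀ m : Fin N, G (m:ℕ) = y (σ m) := by
      intro m; rw [hGval (m:ℕ) m.isLt]
    rw [Finset.sum_congr rfl (fun m _ => h1 m), Equiv.sum_comp σ y]
    exact hsum
  set lam : ℕ → ℝ := fun i => (G i - G (i-1)) / N with hlam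
  set z : ℕ → (Fin N → ℝ) :=
    fun i k => if ((σ⁻¹ k : Fin N):ℕ) < i then (i:ℝ) - N else i with hz
  have hz_mem : ∀ i, 1 ≤ i → i < N → z i ∈ kuraF N '' vertexSet N := by
    intro i h1 h2
    refine ⟨fun k => if ((σ⁻¹ k : Fin N):ℕ) < i then Real.pi/2 else 0, ?_, ?_⟩
    · refine ⟨fun k => ?_, ⟨σ ⟨N-1, by omega⟩, ?_⟩, ⟨σ ⟨0, by omega⟩, ?_⟩⟩
      · by_cases h : ((σ⁻¹ k : Fin N):ℕ) < i
        · right; simp only [if_pos h]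
        · left; simp only [if_neg h]
      · simp only [Equiv.Perm.inv_def, Equiv.symm_apply_apply]
        rw [if_neg]
        show ¬ (N-1 < i)
        omega
      · simp only [Equiv.Perm.inv_def, Equiv.symm_apply_apply]
        rw [if_pos]
        show (0 < i)
        omega
    · rw [kura_ind, card_perm_lt N σ i h2.le]
  have hz_neg_mem : ∀ i, 1 ≤ i → i < N → (-(z i)) ∈ kuraF N '' vertexSet N := by
    intro i h1 h2
    refine ⟨fun k => if i ≤ ((σ⁻¹ k : Fin N):ℕ) then Real.pi/2 else 0, ?_, ?_⟩
    · refine ⟨fun k => ?_, ⟨σ ⟨0, by omega⟩, ?_⟩, ⟨σ ⟨N-1, by omega⟩, ?_⟩⟩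
      · by_cases h : i ≤ ((σ⁻¹ k : Fin N):ℕ)
        · right; simp only [if_pos h]
        · left; simp only [if_neg h]
      · simp only [Equiv.Perm.inv_def, Equiv.symm_apply_apply]
        rw [if_neg]
        show ¬ (i ≤ 0)
        omega
      · simp only [Equiv.Perm.inv_def, Equiv.symm_apply_apply]
        rw [if_pos]
        show (i ≤ N-1)
        omega
    · rw [kura_ind, card_perm_ge N σ i h2.le]
      funext k
      by_cases h : ((σ⁻¹ k : Fin N):ℕ) < i
      · rw [if_neg (by omega), Pi.neg_apply]
        simp only [hz]
        rw [if_pos h]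
        push_cast [Nat.cast_sub h2.le]; ring
      · rw [if_pos (by omega), Pi.neg_apply]
        simp only [hz]
        rw [if_neg h]
        push_cast [Nat.cast_sub h2.le]; ring
  have h0mem : (0 : Fin N → ℝ) ∈ convexHull ℝ (kuraF N '' vertexSet N) := by
    have hv := subset_convexHull ℝ _ (hz_mem 1 le_rfl (by omega))
    have hv' := subset_convexHull ℝ _ (hz_neg_mem 1 le_rfl (by omega))
    have hc := (convex_convexHull ℝ (kuraF N '' vertexSet N)) hv hv'
      (by norm_num : (0:ℝ) ≤ 1/2) (by norm_num : (0:ℝ) ≤ 1/2) (by norm_num)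
    have he : (1/2:ℝ) • z 1 + (1/2:ℝ) • (-(z 1)) = 0 := by
      rw [smul_neg]; abel
    rwa [he] at hc
  have hlam_nonneg : ∀ i ∈ Ico 1 N, 0 ≤ lam i := by
    intro i hi
    simp only [Finset.mem_Ico] at hi
    apply div_nonneg _ hNR.le
    have := hmono (i-1) i (by omega) hi.2
    linarith
  have hsum_lam : ∑ i ∈ Ico 1 N, lam i = (G (N-1) - G 0)/N := by
    rw [← Finset.sum_div]
    congr 1
    exact tele G 0 N hNpos
  have hlam_le : ∑ i ∈ Ico 1 N, lam i ≤ 1 := by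
    rw [hsum_lam, div_le_one hNR]
    rw [hGval (N-1) (by omega), hGval 0 hNpos]
    exact hdiff _ _
  have hS3' : ∑ i ∈ Ico 1 N, lam i * i = G (N-1) := by
    have h1 : ∀ i ∈ Ico 1 N, lam i * i = (G i - G (i-1)) * i / N := by
      intro i _; simp only [hlam]; ring
    rw [Finset.sum_congr rfl h1, ← Finset.sum_div, S3 G N (by omega) hG0]
    field_simp
  have hid : ∀ k, y k = ∑ i ∈ Ico 1 N, lam i * z i k := by
    intro k
    obtain ⟨m, hm⟩ : ∃ m, ((σ⁻¹ k : Fin N):ℕ) = m := ⟨_, rfl⟩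
    have hmN : m < N := hm ▸ (σ⁻¹ k).isLt
    have hyk : y k = G m := by
      rw [hGval m hmN]
      have h1 : (⟨m, hmN⟩ : Fin N) = σ⁻¹ k := Fin.ext hm.symm
      rw [h1, Equiv.Perm.inv_def, Equiv.apply_symm_apply]
    have hsplit := Finset.sum_Ico_consecutive (fun i => lam i * z i k)
      (show 1 ≤ m+1 by omega) (show m+1 ≤ N by omega)
    have hA : ∀ i ∈ Ico 1 (m+1), lam i * z i k = lam i * i := by
      intro i hi
      simp only [Finset.mem_Ico] at hi
      simp only [hz, hm]
      rw [if_neg (by omega)]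
    have hB : ∀ i ∈ Ico (m+1) N, lam i * z i k = lam i * i - (G i - G (i-1)) := by
      intro i hi
      simp only [Finset.mem_Ico] at hi
      simp only [hz, hm]
      rw [if_pos (by omega)]
      have hN' : lam i * (N:ℝ) = G i - G (i-1) := by
        simp only [hlam]; field_simp
      rw [mul_sub, hN']
    rw [← hsplit, Finset.sum_congr rfl hA, Finset.sum_congr rfl hB,
      Finset.sum_sub_distrib, tele G m N hmN]
    have hrec := Finset.sum_Ico_consecutive (fun i => lam i * (i:ℝ))
      (show 1 ≤ m+1 by omega) (show m+1 ≤ N by omega)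
    have hGN : ∑ i ∈ Ico 1 (m+1), lam i * (i:ℝ) + ∑ i ∈ Ico (m+1) N, lam i * (i:ℝ)
        = G (N-1) := by rw [hrec]; exact hS3'
    rw [hyk]
    linarith
  set w : ℕ → ℝ := fun i => if i = 0 then 1 - ∑ j ∈ Ico 1 N, lam j else lam i with hw
  set q : ℕ → (Fin N → ℝ) := fun i => if i = 0 then 0 else z i with hq
  have h0notin : (0:ℕ) ∉ Ico 1 N := by simp
  have hwq : ∀ i ∈ Ico 1 N, w i = lam i ∧ q i = z i := by
    intro i hi
    simp only [Finset.mem_Ico] at hi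
    constructor <;> simp [hw, hq, show i ≠ 0 by omega]
  have hyeq : y = ∑ i ∈ insert 0 (Ico 1 N), w i • q i := by
    rw [Finset.sum_insert h0notin]
    have hw0 : w 0 • q 0 = 0 := by simp [hw, hq]
    rw [hw0, zero_add]
    funext k
    rw [Finset.sum_apply]
    rw [hid k]
    apply Finset.sum_congr rfl
    intro i hi
    rw [(hwq i hi).1, (hwq i hi).2]
    simp
  rw [hyeq]
  apply Convex.sum_mem (convex_convexHull ℝ _)
  · intro i hi
    rcases Finset.mem_insert.1 hi with h | h
    · subst h
      have : w 0 = 1 - ∑ j ∈ Ico 1 N, lam j := by simp [hw]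
      rw [this]; linarith
    · rw [(hwq i h).1]
      exact hlam_nonneg i h
  · rw [Finset.sum_insert h0notin]
    have hw0 : w 0 = 1 - ∑ j ∈ Ico 1 N, lam j := by simp [hw]
    rw [hw0, Finset.sum_congr rfl (fun i hi => (hwq i hi).1)]
    ring
  · intro i hi
    rcases Finset.mem_insert.1 hi with h | h
    · subst h
      have : q 0 = 0 := by simp [hq]
      rw [this]; exact h0mem
    · rw [(hwq i h).2]
      simp only [Finset.mem_Ico] at h
      exact subset_convexHull ℝ _ (hz_mem i h.1 h.2)


/-- The convex hull of the images of the non-constant vertices of the cube equals the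
projection onto the mean-zero hyperplane of the cube `[-N/2, N/2]^N`: up to scaling,
the Voronoi cell of the root lattice `A_{N-1}`. -/
theorem stmt11 (N : ℕ) (hN : 2 ≤ N) :
    convexHull ℝ (kuraF N '' vertexSet N)
      = meanZeroProj N '' {x | ∀ i, x i ∈ Set.Icc (-(N : ℝ) / 2) ((N : ℝ) / 2)} := by
  classical
  have hNR : (0:ℝ) < N := by exact_mod_cast (show 0 < N by omega)
  have hNne : (N:ℝ) ≠ 0 := ne_of_gt hNR
  apply Set.Subset.antisymm
  · apply convexHull_min
    · rintro v ⟨θ, ⟨hθv, -, -⟩, rfl⟩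
      set P : Fin N → Prop := fun k => θ k = Real.pi/2 with hP
      have hθ : θ = fun k => if P k then Real.pi/2 else 0 := by
        funext k
        rcases hθv k with h | h
        · have hnp : ¬ P k := by
            simp only [hP, h]
            intro hc
            have := Real.pi_pos
            linarith
          rw [if_neg hnp, h]
        · have hp : P k := by simp only [hP]; exact h
          rw [if_pos hp, h]
      set i := (univ.filter P).card with hi
      have hile : i ≤ N := by
        rw [hi]
        simpa using Finset.card_filter_le univ P
      have hcard2 : (univ.filter fun a => ¬ P a).card = N - i := by
        have h2 := Finset.card_filter_add_card_filter_not
          (s := (univ : Finset (Fin N))) P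
        simp only [Finset.card_univ, Fintype.card_fin] at h2
        omega
      refine ⟨fun k => if P k then -(N:ℝ)/2 else (N:ℝ)/2, ?_, ?_⟩
      · intro k
        show (if P k then -(N:ℝ)/2 else (N:ℝ)/2) ∈ Set.Icc (-(N:ℝ)/2) ((N:ℝ)/2)
        by_cases h : P k
        · rw [if_pos h]
          exact ⟨le_refl _, by linarith⟩
        · rw [if_neg h]
          exact ⟨by linarith, le_refl _⟩
      · conv_rhs => rw [hθ]
        rw [kura_ind]
        funext k
        simp only [meanZeroProj]
        rw [Finset.sum_ite, Finset.sum_const, Finset.sum_const, nsmul_eq_mul,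
          nsmul_eq_mul, hcard2, ← hi]
        by_cases h : P k
        · rw [if_pos h, if_pos h]
          push_cast [Nat.cast_sub hile]
          field_simp
          ring
        · rw [if_neg h, if_neg h]
          push_cast [Nat.cast_sub hile]
          field_simp
          ring
    · have hC : Convex ℝ {x : Fin N → ℝ | ∀ i, x i ∈ Set.Icc (-(N : ℝ) / 2) ((N : ℝ) / 2)} := by
        intro x hx y hy a b ha hb hab i
        exact (convex_Icc (-(N : ℝ) / 2) ((N : ℝ) / 2)) (hx i) (hy i) ha hb hab
      have hlin : IsLinearMap ℝ (meanZeroProj N) := by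
        constructor
        · intro x y
          funext j
          simp only [meanZeroProj, Pi.add_apply, Finset.sum_add_distrib]
          ring
        · intro c x
          funext j
          simp only [meanZeroProj, Pi.smul_apply, smul_eq_mul, ← Finset.mul_sum]
          ring
      exact hC.is_linear_image hlin
  · rintro v ⟨x, hx, rfl⟩
    apply mem_hull N hN
    · simp only [meanZeroProj]
      rw [Finset.sum_sub_distrib, Finset.sum_const, Finset.card_univ,
        Fintype.card_fin, nsmul_eq_mul]
      field_simp
      ring
    · intro a b
      simp only [meanZeroProj]
      have ha := (hx a).2
      have hb := (hx b).1
      linarith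
end

section
/- Define, for each ω ∈ ℝ^N with Σ ω_i = 0 and ‖ω‖ = 1, γ*(ω) := inf { γ > 0 : there exists θ ∈ ℝ^N with ω + γ f(θ) = 0 and J(θ) negative semidefinite with one-dimensional kernel }, and set γ_max(N) := sup γ*(ω) over all such unit mean-zero ω. Then 1/√(N(N−1)) ≤ γ_max(N) ≤ √2/√(N(N−1)). -/
open Real Matrix Finset

/-- The Jacobian `J(θ)`: `J_ij = cos (θ_i - θ_j)` off the diagonal and
`J_ii = -Σ_{k ≠ i} cos (θ_k - θ_i)`. -/
noncomputable def Jmat (N : ℕ) (θ : Fin N → ℝ) : Matrix (Fin N) (Fin N) ℝ :=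
  Matrix.of fun i j =>
    if i = j then -∑ k ∈ Finset.univ \ {i}, Real.cos (θ k - θ i)
    else Real.cos (θ i - θ j)

lemma cos_symm' {N : ℕ} (θ : Fin N → ℝ) (i j : Fin N) :
    Real.cos (θ i - θ j) = Real.cos (θ j - θ i) := by
  rw [← Real.cos_neg]; ring_nf

noncomputable def wgt (N : ℕ) (θ : Fin N → ℝ) (i j : Fin N) : ℝ :=
  if i = j then 0 else Real.cos (θ i - θ j)

lemma wgt_symm (N : ℕ) (θ : Fin N → ℝ) (i j : Fin N) : wgt N θ i j = wgt N θ j i := by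
  unfold wgt
  rcases eq_or_ne i j with h | h
  · simp [h]
  · simp [h, h.symm, cos_symm' θ i j]

lemma quadform {N : ℕ} (θ : Fin N → ℝ) (x : Fin N → ℝ) :
    x ⬝ᵥ ((-(Jmat N θ)) *ᵥ x)
      = (1/2) * ∑ i, ∑ j, wgt N θ i j * (x i - x j)^2 := by
  have hL : x ⬝ᵥ ((-(Jmat N θ)) *ᵥ x)
      = ∑ i, ∑ j, wgt N θ i j * (x i ^ 2 - x i * x j) := by
    simp only [dotProduct, Matrix.mulVec, Matrix.neg_apply]
    refine Finset.sum_congr rfl fun i _ => ?_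
    have hsplitL := Finset.sum_eq_sum_sdiff_singleton_add (Finset.mem_univ i)
      (fun j => -(Jmat N θ i j) * x j)
    have hsplitR := Finset.sum_eq_sum_sdiff_singleton_add (Finset.mem_univ i)
      (fun j => wgt N θ i j * (x i ^ 2 - x i * x j))
    rw [hsplitL, hsplitR]
    have hJij : ∀ j ∈ Finset.univ \ {i}, -(Jmat N θ i j) * x j
        = -(Real.cos (θ i - θ j)) * x j := by
      intro j hj
      have : i ≠ j := by
        simp only [Finset.mem_sdiff, Finset.mem_singleton] at hj
        exact fun h => hj.2 h.symm
      simp [Jmat, this]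
    have hwij : ∀ j ∈ Finset.univ \ {i}, wgt N θ i j * (x i ^ 2 - x i * x j)
        = Real.cos (θ i - θ j) * (x i ^ 2 - x i * x j) := by
      intro j hj
      have : i ≠ j := by
        simp only [Finset.mem_sdiff, Finset.mem_singleton] at hj
        exact fun h => hj.2 h.symm
      simp [wgt, this]
    rw [Finset.sum_congr rfl hJij, Finset.sum_congr rfl hwij]
    have hJii : Jmat N θ i i = -∑ k ∈ Finset.univ \ {i}, Real.cos (θ k - θ i) := by
      simp [Jmat]
    have hwii : wgt N θ i i * (x i ^ 2 - x i * x i) = 0 := by simp [wgt]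
    rw [hJii, hwii, neg_neg, add_zero]
    rw [mul_add, Finset.mul_sum, Finset.sum_mul, Finset.mul_sum, ← Finset.sum_add_distrib]
    refine Finset.sum_congr rfl fun j hj => ?_
    rw [cos_symm' θ j i]
    ring
  rw [hL]
  have hswap : ∑ i, ∑ j, wgt N θ i j * (x j ^ 2 - x i * x j)
      = ∑ i, ∑ j, wgt N θ i j * (x i ^ 2 - x i * x j) := by
    rw [Finset.sum_comm]
    refine Finset.sum_congr rfl fun i _ => Finset.sum_congr rfl fun j _ => ?_
    rw [wgt_symm]
    ring
  have h2 : (2:ℝ) * (∑ i, ∑ j, wgt N θ i j * (x i ^ 2 - x i * x j))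
      = ∑ i, ∑ j, wgt N θ i j * (x i - x j)^2 := by
    nth_rewrite 1 [two_mul]
    nth_rewrite 1 [← hswap]
    rw [← Finset.sum_add_distrib]
    refine Finset.sum_congr rfl fun i _ => ?_
    rw [← Finset.sum_add_distrib]
    refine Finset.sum_congr rfl fun j _ => ?_
    ring
  linarith [h2]

lemma Jmat_symm {N : ℕ} (θ : Fin N → ℝ) (i j : Fin N) : Jmat N θ i j = Jmat N θ j i := by
  rcases eq_or_ne i j with h | h
  · rw [h]
  · simp [Jmat, h, h.symm, cos_symm' θ i j]

lemma negJ_hermitian {N : ℕ} (θ : Fin N → ℝ) : (-(Jmat N θ)).IsHermitian := by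
  unfold Matrix.IsHermitian
  ext i j
  simp [Matrix.conjTranspose_apply, Jmat_symm θ j i]

lemma negJ_posSemidef {N : ℕ} (θ : Fin N → ℝ)
    (hw : ∀ i j, i ≠ j → 0 ≤ Real.cos (θ i - θ j)) : (-(Jmat N θ)).PosSemidef := by
  refine Matrix.PosSemidef.of_dotProduct_mulVec_nonneg (negJ_hermitian θ) fun x => ?_
  rw [star_trivial]
  rw [show dotProduct x ((-(Jmat N θ)) *ᵥ x) = x ⬝ᵥ ((-(Jmat N θ)) *ᵥ x) from rfl, quadform]
  have : ∀ i ∈ Finset.univ, (0:ℝ) ≤ ∑ j, wgt N θ i j * (x i - x j)^2 := by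
    intro i _
    refine Finset.sum_nonneg fun j _ => mul_nonneg ?_ (sq_nonneg _)
    unfold wgt
    rcases eq_or_ne i j with h | h
    · simp [h]
    · simp only [h, if_false]
      exact hw i j h
  exact mul_nonneg (by norm_num) (Finset.sum_nonneg this)

lemma ker_Jmat {N : ℕ} (hN : 0 < N) (θ : Fin N → ℝ)
    (hw : ∀ i j, i ≠ j → 0 < Real.cos (θ i - θ j)) :
    LinearMap.ker (Matrix.toLin' (Jmat N θ))
      = Submodule.span ℝ {(fun _ => (1:ℝ) : Fin N → ℝ)} := by
  apply le_antisymm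
  · intro x hx
    have hx0 : Jmat N θ *ᵥ x = 0 := by
      have := LinearMap.mem_ker.mp hx
      rwa [Matrix.toLin'_apply] at this
    have hq : x ⬝ᵥ ((-(Jmat N θ)) *ᵥ x) = 0 := by
      rw [Matrix.neg_mulVec, hx0]
      simp
    rw [quadform] at hq
    have hsum : ∑ i, ∑ j, wgt N θ i j * (x i - x j)^2 = 0 := by linarith
    have hterm : ∀ i ∈ Finset.univ, ∑ j, wgt N θ i j * (x i - x j)^2 = 0 := by
      refine (Finset.sum_eq_zero_iff_of_nonneg ?_).mp hsum
      intro i _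
      refine Finset.sum_nonneg fun j _ => mul_nonneg ?_ (sq_nonneg _)
      unfold wgt
      rcases eq_or_ne i j with h | h
      · simp [h]
      · simp only [h, if_false]
        exact le_of_lt (hw i j h)
    have hconst : ∀ i j : Fin N, x i = x j := by
      intro i j
      rcases eq_or_ne i j with h | h
      · rw [h]
      · have h2 : ∀ j' ∈ Finset.univ, wgt N θ i j' * (x i - x j')^2 = 0 := by
          refine (Finset.sum_eq_zero_iff_of_nonneg ?_).mp (hterm i (Finset.mem_univ i))
          intro j' _
          refine mul_nonneg ?_ (sq_nonneg _)
          unfold wgt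
          rcases eq_or_ne i j' with h' | h'
          · simp [h']
          · simp only [h', if_false]
            exact le_of_lt (hw i j' h')
        have h3 := h2 j (Finset.mem_univ j)
        unfold wgt at h3
        rw [if_neg h] at h3
        have h4 : (x i - x j)^2 = 0 := by
          rcases mul_eq_zero.mp h3 with h5 | h5
          · exact absurd h5 (ne_of_gt (hw i j h))
          · exact h5
        have := pow_eq_zero_iff (n := 2) (by norm_num) |>.mp h4
        linarith
    have i0 : Fin N := ⟨0, hN⟩
    rw [Submodule.mem_span_singleton]
    exact ⟨x i0, by funext j; simp [hconst j i0]⟩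
  · rw [Submodule.span_le]
    intro v hv
    simp only [Set.mem_singleton_iff] at hv
    subst hv
    simp only [SetLike.mem_coe, LinearMap.mem_ker, Matrix.toLin'_apply]
    funext i
    have hsplit := Finset.sum_eq_sum_sdiff_singleton_add (Finset.mem_univ i)
      (fun j => Jmat N θ i j * 1)
    have hii : Jmat N θ i i = -∑ k ∈ Finset.univ \ {i}, Real.cos (θ k - θ i) := by
      simp [Jmat]
    have hij : ∀ j ∈ Finset.univ \ {i}, Jmat N θ i j * 1 = Real.cos (θ i - θ j) := by
      intro j hj
      have : i ≠ j := by
        simp only [Finset.mem_sdiff, Finset.mem_singleton] at hj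
        exact fun h => hj.2 h.symm
      simp [Jmat, this]
    show (Jmat N θ *ᵥ fun _ => (1:ℝ)) i = 0
    simp only [Matrix.mulVec, dotProduct]
    rw [hsplit, Finset.sum_congr rfl hij, hii]
    rw [Finset.sum_congr rfl (fun k _ => cos_symm' θ k i)]
    ring

/-- `θ` is a stable fully synchronized configuration for frequency `ω` and coupling `γ`:
`ω + γ f(θ) = 0` and `J(θ)` is negative semidefinite with one-dimensional kernel. -/
def IsStableSync (N : ℕ) (ω : Fin N → ℝ) (γ : ℝ) (θ : Fin N → ℝ) : Prop :=
  (∀ i, ω i + γ * kuraF N θ i = 0) ∧ (-(Jmat N θ)).PosSemidef ∧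
    Module.finrank ℝ (LinearMap.ker (Matrix.toLin' (Jmat N θ))) = 1

lemma finrank_ker_Jmat {N : ℕ} (hN : 0 < N) (θ : Fin N → ℝ)
    (hw : ∀ i j, i ≠ j → 0 < Real.cos (θ i - θ j)) :
    Module.finrank ℝ (LinearMap.ker (Matrix.toLin' (Jmat N θ))) = 1 := by
  rw [ker_Jmat hN θ hw]
  refine finrank_span_singleton ?_
  intro h
  have := congrFun h ⟨0, hN⟩
  simp at this

lemma exists_good (N : ℕ) (hN : 2 ≤ N) (ω : Fin N → ℝ) (h0 : ∑ i, ω i = 0)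
    (h1 : ∑ i, ω i ^ 2 = 1) :
    ∃ γ : ℝ, (0 < γ ∧ ∃ θ : Fin N → ℝ, IsStableSync N ω γ θ) ∧
      γ ≤ Real.sqrt 2 / Real.sqrt ((N : ℝ) * ((N : ℝ) - 1)) := by
  have hN2 : (2:ℝ) ≤ (N:ℝ) := by exact_mod_cast hN
  have h2pos : (0:ℝ) < Real.sqrt 2 := Real.sqrt_pos.mpr (by norm_num)
  have h2sq : (Real.sqrt 2)^2 = 2 := Real.sq_sqrt (by norm_num)
  have hsq : ∀ i, ω i ^ 2 ≤ 1 := by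
    intro i
    calc ω i ^ 2 ≤ ∑ j, ω j ^ 2 :=
          Finset.single_le_sum (f := fun j => ω j ^ 2) (fun j _ => sq_nonneg _)
            (Finset.mem_univ i)
      _ = 1 := h1
  set θ : Fin N → ℝ := fun i => Real.arcsin (ω i / Real.sqrt 2) with hθ
  have hbound : ∀ i, -1 ≤ ω i / Real.sqrt 2 ∧ ω i / Real.sqrt 2 ≤ 1 := by
    intro i
    constructor
    · rw [le_div_iff₀ h2pos]
      nlinarith [hsq i, h2sq, h2pos]
    · rw [div_le_one h2pos]
      nlinarith [hsq i, h2sq, h2pos]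
  have hsin : ∀ i, Real.sin (θ i) = ω i / Real.sqrt 2 := fun i =>
    Real.sin_arcsin (hbound i).1 (hbound i).2
  have hcos : ∀ i, Real.cos (θ i) = Real.sqrt (1 - ω i ^ 2 / 2) := by
    intro i
    show Real.cos (Real.arcsin (ω i / Real.sqrt 2)) = _
    rw [Real.cos_arcsin]
    congr 1
    rw [div_pow, h2sq]
  have hcos0 : ∀ i, 0 ≤ Real.cos (θ i) := by
    intro i; rw [hcos i]; exact Real.sqrt_nonneg _
  have hcossq : ∀ i, Real.cos (θ i) ^ 2 = 1 - ω i ^ 2 / 2 := by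
    intro i
    rw [hcos i, Real.sq_sqrt]
    nlinarith [hsq i]
  -- pairwise positivity
  have hpair : ∀ i j : Fin N, i ≠ j → ω i ^ 2 + ω j ^ 2 ≤ 1 := by
    intro i j hij
    have hsub : ({i, j} : Finset (Fin N)) ⊆ Finset.univ := Finset.subset_univ _
    have := Finset.sum_le_sum_of_subset_of_nonneg hsub
      (fun k _ _ => sq_nonneg (ω k))
    rw [Finset.sum_pair hij, h1] at this
    exact this
  have hposc : ∀ i j : Fin N, i ≠ j → 0 < Real.cos (θ i - θ j) := by
    intro i j hij
    rw [Real.cos_sub]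
    have hcc2 : (Real.cos (θ i) * Real.cos (θ j))^2
        = (1 - ω i ^ 2 / 2) * (1 - ω j ^ 2 / 2) := by
      rw [mul_pow, hcossq i, hcossq j]
    have hcc0 : 0 ≤ Real.cos (θ i) * Real.cos (θ j) := mul_nonneg (hcos0 i) (hcos0 j)
    have hccsq : 1/2 ≤ (Real.cos (θ i) * Real.cos (θ j))^2 := by
      rw [hcc2]
      nlinarith [hpair i j hij, sq_nonneg (ω i * ω j), sq_nonneg (ω i), sq_nonneg (ω j)]
    have hcc : 1/2 ≤ Real.cos (θ i) * Real.cos (θ j) := by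
      nlinarith [hccsq, hcc0]
    have hss : Real.sin (θ i) * Real.sin (θ j) = ω i * ω j / 2 := by
      rw [hsin i, hsin j, div_mul_div_comm, Real.mul_self_sqrt (by norm_num : (0:ℝ) ≤ 2)]
    have hss_ge : -(1/4 : ℝ) ≤ ω i * ω j / 2 := by
      nlinarith [sq_nonneg (ω i + ω j), hpair i j hij]
    rw [hss]
    linarith
  set g : ℝ := ∑ j, Real.cos (θ j) with hg
  have hcos_ge : ∀ i, 1 - ω i ^ 2 / 2 ≤ Real.cos (θ i) := by
    intro i
    have hle1 : Real.cos (θ i) ≤ 1 := Real.cos_le_one _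
    nlinarith [hcossq i, hcos0 i, hsq i]
  have hg_ge : (N:ℝ) - 1/2 ≤ g := by
    have hle : ∑ j, (1 - ω j ^ 2 / 2) ≤ g := Finset.sum_le_sum fun j _ => hcos_ge j
    have hsum : ∑ j, (1 - ω j ^ 2 / 2) = (N:ℝ) - 1/2 := by
      rw [Finset.sum_sub_distrib]
      simp only [Finset.sum_const, Finset.card_univ, Fintype.card_fin, nsmul_eq_mul, mul_one]
      rw [show (∑ j, ω j ^ 2 / 2) = (∑ j, ω j ^ 2) / 2 from (Finset.sum_div _ _ _).symm, h1]
    linarith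
  have hgpos : 0 < g := by linarith
  refine ⟨Real.sqrt 2 / g, ⟨div_pos h2pos hgpos, θ, ?_, ?_, ?_⟩, ?_⟩
  · -- equation
    intro i
    have hsinsum : ∑ j, Real.sin (θ j) = 0 := by
      rw [Finset.sum_congr rfl fun j _ => hsin j, ← Finset.sum_div, h0, zero_div]
    have hkura : kuraF N θ i = -(ω i / Real.sqrt 2) * g := by
      unfold kuraF
      rw [Finset.sum_congr rfl fun j _ => Real.sin_sub (θ j) (θ i)]
      rw [Finset.sum_sub_distrib, ← Finset.sum_mul, ← Finset.sum_mul, hsinsum, hsin i]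
      ring
    rw [hkura]
    field_simp
    ring
  · -- PosSemidef
    exact negJ_posSemidef θ fun i j hij => le_of_lt (hposc i j hij)
  · -- finrank
    exact finrank_ker_Jmat (by omega) θ hposc
  · -- bound
    have hNN : (0:ℝ) < (N:ℝ) * ((N:ℝ) - 1) := by nlinarith
    have hspos : 0 < Real.sqrt ((N:ℝ) * ((N:ℝ) - 1)) := Real.sqrt_pos.mpr hNN
    have hsqrtNN : Real.sqrt ((N:ℝ) * ((N:ℝ) - 1)) ≤ g := by
      have h1' : (N:ℝ) * ((N:ℝ) - 1) ≤ ((N:ℝ) - 1/2)^2 := by nlinarith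
      calc Real.sqrt ((N:ℝ) * ((N:ℝ) - 1)) ≤ Real.sqrt (((N:ℝ) - 1/2)^2) :=
            Real.sqrt_le_sqrt h1'
        _ = (N:ℝ) - 1/2 := Real.sqrt_sq (by linarith)
        _ ≤ g := hg_ge
    gcongr

/-- The critical coupling `γ*(ω)`. -/
noncomputable def gammaStar (N : ℕ) (ω : Fin N → ℝ) : ℝ :=
  sInf {γ : ℝ | 0 < γ ∧ ∃ θ : Fin N → ℝ, IsStableSync N ω γ θ}

/-- `γ_max(N)`: the supremum of `γ*(ω)` over unit mean-zero frequency vectors. -/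
noncomputable def gammaMax (N : ℕ) : ℝ :=
  sSup {g : ℝ | ∃ ω : Fin N → ℝ, (∑ i, ω i = 0) ∧ (∑ i, ω i ^ 2 = 1) ∧
    g = gammaStar N ω}

theorem stmt15 (N : ℕ) (hN : 2 ≤ N) :
    1 / Real.sqrt ((N : ℝ) * ((N : ℝ) - 1)) ≤ gammaMax N ∧
    gammaMax N ≤ Real.sqrt 2 / Real.sqrt ((N : ℝ) * ((N : ℝ) - 1)) := by
  have hN2 : (2:ℝ) ≤ (N:ℝ) := by exact_mod_cast hN
  have hNN : (0:ℝ) < (N:ℝ) * ((N:ℝ) - 1) := by nlinarith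
  set B : ℝ := Real.sqrt 2 / Real.sqrt ((N : ℝ) * ((N : ℝ) - 1)) with hB
  set b : ℝ := 1 / Real.sqrt ((N : ℝ) * ((N : ℝ) - 1)) with hb
  set sN : ℝ := Real.sqrt (N:ℝ) with hsN
  set s1 : ℝ := Real.sqrt ((N:ℝ) - 1) with hs1
  have hsNpos : 0 < sN := Real.sqrt_pos.mpr (by linarith)
  have hs1pos : 0 < s1 := Real.sqrt_pos.mpr (by linarith)
  have hsNsq : sN ^ 2 = (N:ℝ) := Real.sq_sqrt (by linarith)
  have hs1sq : s1 ^ 2 = (N:ℝ) - 1 := Real.sq_sqrt (by linarith)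
  have hsplitNN : Real.sqrt ((N:ℝ) * ((N:ℝ) - 1)) = sN * s1 :=
    Real.sqrt_mul (by linarith) _
  -- the special frequency vector
  set i0 : Fin N := ⟨0, by omega⟩ with hi0
  set ω₀ : Fin N → ℝ := fun i => if i = i0 then s1 / sN else -(1 / (sN * s1)) with hω₀
  have hcard : (Finset.univ \ {i0} : Finset (Fin N)).card = N - 1 := by
    rw [Finset.card_sdiff_of_subset (Finset.singleton_subset_iff.mpr (Finset.mem_univ i0))]
    simp
  have hcast : ((N - 1 : ℕ) : ℝ) = (N:ℝ) - 1 := by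
    have : (1:ℕ) ≤ N := by omega
    push_cast [this]
    ring
  have hωsum : ∑ i, ω₀ i = 0 := by
    rw [Finset.sum_eq_sum_sdiff_singleton_add (Finset.mem_univ i0) ω₀]
    have hrest : ∀ i ∈ Finset.univ \ {i0}, ω₀ i = -(1 / (sN * s1)) := by
      intro i hi
      simp only [Finset.mem_sdiff, Finset.mem_singleton] at hi
      simp [hω₀, hi.2]
    rw [Finset.sum_congr rfl hrest, Finset.sum_const, hcard]
    simp only [hω₀, if_pos rfl, nsmul_eq_mul, hcast]
    field_simp
    nlinarith [hs1sq]
  have hωsq : ∑ i, ω₀ i ^ 2 = 1 := by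
    rw [Finset.sum_eq_sum_sdiff_singleton_add (Finset.mem_univ i0) (fun i => ω₀ i ^ 2)]
    have hrest : ∀ i ∈ Finset.univ \ {i0}, ω₀ i ^ 2 = (1 / (sN * s1))^2 := by
      intro i hi
      simp only [Finset.mem_sdiff, Finset.mem_singleton] at hi
      simp [hω₀, hi.2]
    rw [Finset.sum_congr rfl hrest, Finset.sum_const, hcard]
    simp only [hω₀, if_pos rfl, nsmul_eq_mul, hcast]
    field_simp
    nlinarith [hs1sq, hsNsq]
  -- every admissible γ for ω₀ is at least b
  have hlow : ∀ γ : ℝ, (0 < γ ∧ ∃ θ : Fin N → ℝ, IsStableSync N ω₀ γ θ) → b ≤ γ := by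
    rintro γ ⟨hγpos, θ, heq, -, -⟩
    have h0 := heq i0
    have hω₀i0 : ω₀ i0 = s1 / sN := by simp [hω₀]
    have hkbound : |kuraF N θ i0| ≤ (N:ℝ) - 1 := by
      unfold kuraF
      calc |∑ j, Real.sin (θ j - θ i0)| ≤ ∑ j, |Real.sin (θ j - θ i0)| :=
            Finset.abs_sum_le_sum_abs _ _
        _ = ∑ j ∈ Finset.univ \ {i0}, |Real.sin (θ j - θ i0)| := by
            rw [Finset.sum_eq_sum_sdiff_singleton_add (Finset.mem_univ i0)
              (fun j => |Real.sin (θ j - θ i0)|)]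
            simp
        _ ≤ ∑ j ∈ Finset.univ \ {i0}, 1 :=
            Finset.sum_le_sum fun j _ => Real.abs_sin_le_one (θ j - θ i0)
        _ = (N:ℝ) - 1 := by rw [Finset.sum_const, hcard]; simp [hcast]
    have hk : -(kuraF N θ i0) ≤ (N:ℝ) - 1 := (neg_le_abs _).trans hkbound
    rw [hω₀i0] at h0
    have hεγ : s1 / sN ≤ γ * ((N:ℝ) - 1) := by
      calc s1 / sN = γ * (-(kuraF N θ i0)) := by linarith
        _ ≤ γ * ((N:ℝ) - 1) := mul_le_mul_of_nonneg_left hk hγpos.le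
    have h3 : s1 ≤ γ * ((N:ℝ) - 1) * sN := by
      rw [div_le_iff₀ hsNpos] at hεγ
      linarith
    have h4 : s1 * s1 ≤ γ * ((N:ℝ) - 1) * sN * s1 :=
      mul_le_mul_of_nonneg_right h3 hs1pos.le
    have h6 : 1 ≤ γ * (sN * s1) := by
      have hNm1 : (0:ℝ) < (N:ℝ) - 1 := by linarith
      have h5 : ((N:ℝ) - 1) * 1 ≤ ((N:ℝ) - 1) * (γ * (sN * s1)) := by nlinarith [hs1sq]
      exact le_of_mul_le_mul_left h5 hNm1
    rw [hb, hsplitNN, div_le_iff₀ (mul_pos hsNpos hs1pos)]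
    linarith
  -- assembling
  have hbddBelow : ∀ ω : Fin N → ℝ,
      BddBelow {γ : ℝ | 0 < γ ∧ ∃ θ : Fin N → ℝ, IsStableSync N ω γ θ} :=
    fun ω => ⟨0, fun γ hγ => le_of_lt hγ.1⟩
  have hstar_le : ∀ ω : Fin N → ℝ, (∑ i, ω i = 0) → (∑ i, ω i ^ 2 = 1) →
      gammaStar N ω ≤ B := by
    intro ω hs hq
    obtain ⟨γ, hγmem, hγle⟩ := exists_good N hN ω hs hq
    exact le_trans (csInf_le (hbddBelow ω) hγmem) hγle
  have hmem0 : gammaStar N ω₀ ∈ {g : ℝ | ∃ ω : Fin N → ℝ, (∑ i, ω i = 0) ∧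
      (∑ i, ω i ^ 2 = 1) ∧ g = gammaStar N ω} := ⟨ω₀, hωsum, hωsq, rfl⟩
  have hbddAbove : BddAbove {g : ℝ | ∃ ω : Fin N → ℝ, (∑ i, ω i = 0) ∧
      (∑ i, ω i ^ 2 = 1) ∧ g = gammaStar N ω} := by
    refine ⟨B, fun g hg => ?_⟩
    obtain ⟨ω, hs, hq, rfl⟩ := hg
    exact hstar_le ω hs hq
  constructor
  · have hSne : Set.Nonempty {γ : ℝ | 0 < γ ∧ ∃ θ : Fin N → ℝ, IsStableSync N ω₀ γ θ} := by
      obtain ⟨γ, hγmem, -⟩ := exists_good N hN ω₀ hωsum hωsq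
      exact ⟨γ, hγmem⟩
    have hb1 : b ≤ gammaStar N ω₀ := le_csInf hSne hlow
    have hb2 : gammaStar N ω₀ ≤ gammaMax N := le_csSup hbddAbove hmem0
    exact le_trans hb1 hb2
  · refine csSup_le ⟨gammaStar N ω₀, hmem0⟩ fun g hg => ?_
    obtain ⟨ω, hs, hq, rfl⟩ := hg
    exact hstar_le ω hs hq
end
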